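/- Let I, J be independent Exponential random variables of rate 1/2 and ω an independent Exponential random variable of rate 1. Define I' = (I − J)⁺ + ω, J' = (J − I)⁺ + ω, and Y = min(I, J). Then (I', J', Y) has the same joint law as (I, J, ω): I' and J' are independent Exponential of rate 1/2, Y is Exponential of rate 1, and I', J', Y are mutually independent. -/

import Mathlib

open MeasureTheory ProbabilityTheory Set Real
open scoped ENNReal

noncomputable def eDens (r : ℝ) : ℝ → ℝ≥0∞ :=
  fun x => if 0 ≤ x then ENNReal.ofReal (r * Real.exp (-(r*x))) else 0

lemma measurable_eDens (r : ℝ) : Measurable (eDens r) := by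
  unfold eDens
  refine Measurable.ite measurableSet_Ici ?_ measurable_const
  exact ENNReal.measurable_ofReal.comp
    ((Real.measurable_exp.comp ((measurable_id.const_mul r).neg)).const_mul r)

noncomputable def eMeas (r : ℝ) : Measure ℝ := MeasureTheory.volume.withDensity (eDens r)

lemma expRate_integrableOn {r : ℝ} (hr : 0 < r) (s : ℝ) :
    IntegrableOn (fun x => r * Real.exp (-(r*x))) (Ioi s) := by
  have h := (exp_neg_integrableOn_Ioi s hr).congr_fun
    (g := fun x => Real.exp (-(r*x))) (fun x _ => by ring_nf) measurableSet_Ioi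
  exact h.const_mul r

lemma tendsto_exp_neg_rate {r : ℝ} (hr : 0 < r) :
    Filter.Tendsto (fun x : ℝ => Real.exp (-(r*x))) Filter.atTop (nhds 0) := by
  apply Real.tendsto_exp_atBot.comp
  exact Filter.tendsto_neg_atTop_atBot.comp
    (Filter.Tendsto.const_mul_atTop hr Filter.tendsto_id)

lemma integral_exp_rate {r : ℝ} (hr : 0 < r) (s : ℝ) :
    ∫ x in Ioi s, r * Real.exp (-(r*x)) = Real.exp (-(r*s)) := by
  have hd : ∀ x ∈ Ici s, HasDerivAt (fun x => -Real.exp (-(r*x))) (r * Real.exp (-(r*x))) x := by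
    intro x _
    have h1 : HasDerivAt (fun x : ℝ => -(r*x)) (-r) x := by
      simpa using ((hasDerivAt_id x).const_mul (-r))
    have := (h1.exp).neg
    exact this.congr_deriv (by ring)
  have ht : Filter.Tendsto (fun x => -Real.exp (-(r*x))) Filter.atTop (nhds 0) := by
    simpa using (tendsto_exp_neg_rate hr).neg
  have h := integral_Ioi_of_hasDerivAt_of_tendsto' hd (expRate_integrableOn hr s) ht
  simpa using h


lemma eMeas_lintegral (r : ℝ) {f : ℝ → ℝ≥0∞} (hf : Measurable f) {s : Set ℝ}
    (hs : MeasurableSet s) :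
    ∫⁻ x in s, f x ∂(eMeas r) = ∫⁻ x in s, eDens r x * f x ∂(MeasureTheory.volume) := by
  rw [eMeas, restrict_withDensity hs,
    lintegral_withDensity_eq_lintegral_mul _ (measurable_eDens r) hf]
  rfl

lemma eMeas_Ioi_of_nonneg {r : ℝ} (hr : 0 < r) {s : ℝ} (hs : 0 ≤ s) :
    eMeas r (Ioi s) = ENNReal.ofReal (Real.exp (-(r * s))) := by
  rw [eMeas, withDensity_apply _ measurableSet_Ioi]
  have h1 : ∫⁻ x in Ioi s, eDens r x
      = ∫⁻ x in Ioi s, ENNReal.ofReal (r * Real.exp (-(r*x))) := by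
    refine setLIntegral_congr_fun measurableSet_Ioi ?_
    intro x hx
    have : (0:ℝ) ≤ x := le_trans hs (le_of_lt hx)
    simp [eDens, this]
  rw [h1, ← ofReal_integral_eq_lintegral_ofReal (expRate_integrableOn hr s)
    (Filter.Eventually.of_forall (fun x => by positivity)), integral_exp_rate hr s]

lemma eMeas_Ioi {r : ℝ} (hr : 0 < r) (s : ℝ) :
    eMeas r (Ioi s) = ENNReal.ofReal (Real.exp (-(r * max s 0))) := by
  rcases le_or_gt 0 s with hs | hs
  · rw [max_eq_left hs]; exact eMeas_Ioi_of_nonneg hr hs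
  · rw [max_eq_right hs.le]
    have hsplit : Ioi s = Ioc s 0 ∪ Ioi (0:ℝ) := by
      rw [Ioc_union_Ioi_eq_Ioi hs.le]
    have h0 : eMeas r (Ioc s 0) = 0 := by
      rw [eMeas, withDensity_apply _ measurableSet_Ioc]
      have : ∫⁻ x in Ioc s 0, eDens r x = ∫⁻ x in Ioo s 0, eDens r x := by
        exact setLIntegral_congr (Ioo_ae_eq_Ioc (a := s) (b := 0)).symm
      rw [this]
      have : ∫⁻ x in Ioo s 0, eDens r x = ∫⁻ _x in Ioo s 0, 0 := by
        refine setLIntegral_congr_fun measurableSet_Ioo ?_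
        intro x hx
        simp [eDens, not_le.2 hx.2]
      simp [this]
    calc eMeas r (Ioi s) = eMeas r (Ioc s 0) + eMeas r (Ioi 0) := by
            rw [hsplit]
            exact measure_union Ioc_disjoint_Ioi_same measurableSet_Ioi
      _ = ENNReal.ofReal (Real.exp (-(r * 0))) := by
            rw [h0, zero_add, eMeas_Ioi_of_nonneg hr le_rfl]


lemma eMeas_Iic_zero (r : ℝ) : eMeas r (Iic 0) = 0 := by
  rw [eMeas, withDensity_apply _ measurableSet_Iic]
  have h : ∫⁻ x in Iic (0:ℝ), eDens r x = ∫⁻ x in Iio (0:ℝ), eDens r x :=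
    setLIntegral_congr (Iio_ae_eq_Iic (a := (0:ℝ))).symm
  rw [h]
  have : ∫⁻ x in Iio (0:ℝ), eDens r x = ∫⁻ _x in Iio (0:ℝ), 0 := by
    refine setLIntegral_congr_fun measurableSet_Iio ?_
    intro x hx
    have : ¬ (0 ≤ x) := not_le.2 hx
    simp [eDens, this]
  simp [this]

lemma eMeas_univ {r : ℝ} (hr : 0 < r) : eMeas r univ = 1 := by
  have : (univ : Set ℝ) = Iic 0 ∪ Ioi 0 := (Iic_union_Ioi).symm
  rw [this, measure_union (Iic_disjoint_Ioi le_rfl) measurableSet_Ioi, eMeas_Iic_zero,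
    zero_add, eMeas_Ioi hr]
  simp

instance eMeas_prob (r : ℝ) [Fact (0 < r)] : IsProbabilityMeasure (eMeas r) :=
  ⟨eMeas_univ (Fact.out)⟩

lemma eq_eMeas_of_tail (ν : Measure ℝ) [IsProbabilityMeasure ν] {r : ℝ} (hr : 0 < r)
    (h : ∀ s : ℝ, 0 ≤ s → ν (Ioi s) = ENNReal.ofReal (Real.exp (-(r*s)))) :
    ν = eMeas r := by
  haveI : Fact (0 < r) := ⟨hr⟩
  have htail : ∀ s : ℝ, ν (Ioi s) = ENNReal.ofReal (Real.exp (-(r * max s 0))) := by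
    intro s
    rcases le_or_gt 0 s with hs | hs
    · rw [max_eq_left hs]; exact h s hs
    · rw [max_eq_right hs.le]
      refine le_antisymm ?_ ?_
      · simpa using prob_le_one (μ := ν) (s := Ioi s)
      · calc ENNReal.ofReal (Real.exp (-(r*0))) = ν (Ioi 0) := (h 0 le_rfl).symm
          _ ≤ ν (Ioi s) := measure_mono (Ioi_subset_Ioi hs.le)
  have key : ∀ (m : Measure ℝ), IsProbabilityMeasure m →
      (∀ s : ℝ, m (Ioi s) = ENNReal.ofReal (Real.exp (-(r * max s 0)))) →
      ∀ a b : ℝ, a < b → m (Ioc a b)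
        = ENNReal.ofReal (Real.exp (-(r * max a 0))) - ENNReal.ofReal (Real.exp (-(r * max b 0))) := by
    intro m hm ht a b hab
    rw [← Ioi_diff_Ioi, measure_diff (Ioi_subset_Ioi hab.le) measurableSet_Ioi.nullMeasurableSet
      (by rw [ht b]; exact ENNReal.ofReal_ne_top), ht a, ht b]
  refine Measure.ext_of_Ioc ν (eMeas r) ?_
  intro a b hab
  rw [key ν inferInstance htail a b hab,
    key (eMeas r) inferInstance (fun s => eMeas_Ioi hr s) a b hab]


lemma spanning_Ioi : IsCountablySpanning (range (Ioi : ℝ → Set ℝ)) := by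
  refine ⟨fun n => Ioi (-(n:ℝ)), fun n => mem_range_self _, ?_⟩
  ext x
  simp only [mem_iUnion, mem_Ioi, mem_univ, iff_true]
  obtain ⟨n, hn⟩ := exists_nat_gt (-x)
  exact ⟨n, by linarith⟩

lemma real_generateFrom_Ioi :
    MeasurableSpace.generateFrom (range (Ioi : ℝ → Set ℝ)) = (inferInstance : MeasurableSpace ℝ) := by
  rw [BorelSpace.measurable_eq (α := ℝ)]
  exact (borel_eq_generateFrom_Ioi (α := ℝ)).symm

lemma generateFrom_corner2 :
    MeasurableSpace.generateFrom
      (Set.image2 (· ×ˢ ·) (range (Ioi : ℝ → Set ℝ)) (range (Ioi : ℝ → Set ℝ)))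
      = (inferInstance : MeasurableSpace (ℝ × ℝ)) :=
  generateFrom_eq_prod real_generateFrom_Ioi real_generateFrom_Ioi spanning_Ioi spanning_Ioi

lemma spanning_corner2 : IsCountablySpanning
    (Set.image2 (· ×ˢ ·) (range (Ioi : ℝ → Set ℝ)) (range (Ioi : ℝ → Set ℝ))) :=
  spanning_Ioi.prod spanning_Ioi

lemma generateFrom_corner3 :
    MeasurableSpace.generateFrom
      (Set.image2 (· ×ˢ ·) (range (Ioi : ℝ → Set ℝ))
        (Set.image2 (· ×ˢ ·) (range (Ioi : ℝ → Set ℝ)) (range (Ioi : ℝ → Set ℝ))))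
      = (inferInstance : MeasurableSpace (ℝ × ℝ × ℝ)) :=
  generateFrom_eq_prod real_generateFrom_Ioi generateFrom_corner2 spanning_Ioi spanning_corner2

lemma ext3 (μ₁ μ₂ : Measure (ℝ × ℝ × ℝ)) [IsFiniteMeasure μ₁]
    (huniv : μ₁ univ = μ₂ univ)
    (h : ∀ a b c : ℝ, μ₁ (Ioi a ×ˢ Ioi b ×ˢ Ioi c) = μ₂ (Ioi a ×ˢ Ioi b ×ˢ Ioi c)) :
    μ₁ = μ₂ := by
  refine MeasureTheory.ext_of_generate_finite _ generateFrom_corner3.symm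
    (isPiSystem_Ioi.prod (isPiSystem_Ioi.prod isPiSystem_Ioi)) ?_ huniv
  rintro S ⟨A, ⟨a, rfl⟩, B, ⟨B1, ⟨b, rfl⟩, B2, ⟨c, rfl⟩, rfl⟩, rfl⟩
  exact h a b c


lemma exp_integrableOn_Ioi (s : ℝ) : IntegrableOn (fun x => Real.exp (-x)) (Ioi s) :=
  (expRate_integrableOn one_pos s).congr_fun (fun x _ => by norm_num) measurableSet_Ioi

lemma integral_exp_neg_Ioi' (s : ℝ) : ∫ x in Ioi s, Real.exp (-x) = Real.exp (-s) := by
  have := integral_exp_rate one_pos s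
  simpa using this

noncomputable def phiB (a : ℝ) : ℝ → ℝ := fun z => Real.exp (-z) * Real.exp (-(max (a - z) 0 / 2))

lemma phiB_cont (a : ℝ) : Continuous (phiB a) := by
  unfold phiB
  fun_prop

lemma phiB_integrableOn (a b : ℝ) : IntegrableOn (phiB a) (Ioi b) := by
  refine Integrable.mono (exp_integrableOn_Ioi b) (phiB_cont a).aestronglyMeasurable.restrict ?_
  refine Filter.Eventually.of_forall fun z => ?_
  have h1 : Real.exp (-(max (a - z) 0 / 2)) ≤ 1 := by
    rw [Real.exp_le_one_iff]
    have : (0:ℝ) ≤ max (a - z) 0 := le_max_right _ _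
    linarith
  have h0 : (0:ℝ) < Real.exp (-z) := Real.exp_pos _
  simp only [phiB, Real.norm_eq_abs]
  rw [abs_of_pos (mul_pos h0 (Real.exp_pos _)), abs_of_pos h0]
  nlinarith [Real.exp_pos (-(max (a - z) 0 / 2))]

noncomputable def Breal (a b : ℝ) : ℝ := if a ≤ b then Real.exp (-b)
  else 2*Real.exp (-((a+b)/2)) - Real.exp (-a)

lemma Breal_nonneg (a b : ℝ) : 0 ≤ Breal a b := by
  unfold Breal
  split_ifs with h
  · positivity
  · push_neg at h
    have : Real.exp (-a) ≤ Real.exp (-((a+b)/2)) := by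
      apply Real.exp_le_exp.2; linarith
    nlinarith [Real.exp_pos (-((a+b)/2))]

lemma integral_phiB (a b : ℝ) : ∫ z in Ioi b, phiB a z = Breal a b := by
  unfold Breal
  split_ifs with h
  · rw [setIntegral_congr_fun measurableSet_Ioi (g := fun z => Real.exp (-z))
      (fun z hz => by
        have : max (a - z) 0 = 0 := max_eq_right (by simp only [mem_Ioi] at hz; linarith)
        simp [phiB, this])]
    exact integral_exp_neg_Ioi' b
  · push_neg at h
    have hsplit : Ioi b = Ioc b a ∪ Ioi a := (Ioc_union_Ioi_eq_Ioi h.le).symm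
    rw [hsplit, setIntegral_union Ioc_disjoint_Ioi_same measurableSet_Ioi
      ((phiB_integrableOn a b).mono_set (by rw [hsplit]; exact subset_union_left))
      ((phiB_integrableOn a b).mono_set (by rw [hsplit]; exact subset_union_right))]
    have h2 : ∫ z in Ioi a, phiB a z = Real.exp (-a) := by
      rw [setIntegral_congr_fun measurableSet_Ioi (g := fun z => Real.exp (-z))
        (fun z hz => by
          have : max (a - z) 0 = 0 := max_eq_right (by simp only [mem_Ioi] at hz; linarith)
          simp [phiB, this])]
      exact integral_exp_neg_Ioi' a
    have h1 : ∫ z in Ioc b a, phiB a z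
        = ∫ z in Ioc b a, Real.exp (-(a/2)) * Real.exp (-(z/2)) := by
      refine setIntegral_congr_fun measurableSet_Ioc (fun z hz => ?_)
      have : max (a - z) 0 = a - z := max_eq_left (by simp only [mem_Ioc] at hz; linarith)
      simp only [phiB, this, ← Real.exp_add]
      congr 1
      ring
    rw [h1, h2]
    have h3 : ∫ z in Ioc b a, Real.exp (-(a/2)) * Real.exp (-(z/2))
        = Real.exp (-(a/2)) * ∫ z in Ioc b a, Real.exp (-(z/2)) := integral_const_mul _ _
    have h4 : ∫ z in Ioc b a, Real.exp (-(z/2))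
        = -2*Real.exp (-(a/2)) + 2*Real.exp (-(b/2)) := by
      rw [← intervalIntegral.integral_of_le h.le]
      have hd : ∀ z ∈ uIcc b a, HasDerivAt (fun z => -2*Real.exp (-(z/2)))
          (Real.exp (-(z/2))) z := by
        intro z _
        have h1 : HasDerivAt (fun z : ℝ => -(z/2)) (-(1/2)) z := by
          exact ((hasDerivAt_id z).div_const 2).neg
        have := (h1.exp).const_mul (-2 : ℝ)
        exact this.congr_deriv (by ring)
      rw [intervalIntegral.integral_eq_sub_of_hasDerivAt hd
        (Continuous.intervalIntegrable (by fun_prop) _ _)]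
      ring
    rw [h3, h4]
    have e1 : Real.exp (-(a/2)) * Real.exp (-(b/2)) = Real.exp (-((a+b)/2)) := by
      rw [← Real.exp_add]; congr 1; ring
    have e2 : Real.exp (-(a/2)) * Real.exp (-(a/2)) = Real.exp (-a) := by
      rw [← Real.exp_add]; congr 1; ring
    nlinarith [e1, e2]

lemma Breal_add (a b : ℝ) : Breal a b + Breal b a = 2 * Real.exp (-((a+b)/2)) := by
  unfold Breal
  rcases le_total a b with h | h
  · rw [if_pos h]
    by_cases h' : b ≤ a
    · rw [if_pos h']
      have : a = b := le_antisymm h h'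
      subst this
      have : -((a+a)/2) = -a := by ring
      rw [this]; ring
    · rw [if_neg h']
      have : -((b+a)/2) = -((a+b)/2) := by ring
      rw [this]; ring
  · by_cases h' : a ≤ b
    · rw [if_pos h', if_pos (le_antisymm h' h ▸ le_rfl)]
      have : a = b := le_antisymm h' h
      subst this
      have : -((a+a)/2) = -a := by ring
      rw [this]; ring
    · rw [if_neg h', if_pos h]
      ring


instance fact_half : Fact ((0:ℝ) < 1/2) := ⟨by norm_num⟩
instance fact_one : Fact ((0:ℝ) < 1) := ⟨one_pos⟩

noncomputable def Tmap : ℝ × ℝ × ℝ → ℝ × ℝ × ℝ := fun p =>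
  (max (p.1 - p.2.1) 0 + p.2.2, max (p.2.1 - p.1) 0 + p.2.2, min p.1 p.2.1)

lemma measurable_Tmap : Measurable Tmap := by
  unfold Tmap
  fun_prop

noncomputable def kap : Measure (ℝ × ℝ × ℝ) :=
  (eMeas (1/2)).prod ((eMeas (1/2)).prod (eMeas 1))

instance : IsProbabilityMeasure kap := by
  unfold kap; infer_instance

def Pre (a b c : ℝ) : Set (ℝ × ℝ × ℝ) := Tmap ⁻¹' (Ioi a ×ˢ Ioi b ×ˢ Ioi c)

lemma measurableSet_Pre (a b c : ℝ) : MeasurableSet (Pre a b c) :=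
  measurable_Tmap ((measurableSet_Ioi.prod (measurableSet_Ioi.prod measurableSet_Ioi)))

lemma lint_A {c : ℝ} (hc : 0 ≤ c) :
    ∫⁻ y, (Ioi c).indicator (fun y => ENNReal.ofReal (Real.exp (-(y/2)))) y ∂(eMeas (1/2))
      = ENNReal.ofReal ((1/2) * Real.exp (-c)) := by
  rw [lintegral_indicator measurableSet_Ioi _,
    eMeas_lintegral _ (by fun_prop) measurableSet_Ioi]
  have h1 : ∀ y ∈ Ioi c, eDens (1/2) y * ENNReal.ofReal (Real.exp (-(y/2)))
      = ENNReal.ofReal ((1/2) * Real.exp (-(1*y))) := by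
    intro y hy
    have hy0 : (0:ℝ) ≤ y := le_trans hc (le_of_lt hy)
    rw [eDens, if_pos hy0, ← ENNReal.ofReal_mul (by positivity)]
    congr 1
    rw [mul_assoc, ← Real.exp_add]
    congr 2
    ring
  rw [setLIntegral_congr_fun measurableSet_Ioi h1,
    ← ofReal_integral_eq_lintegral_ofReal
      (((expRate_integrableOn one_pos c).congr_fun (fun x _ => by norm_num)
        measurableSet_Ioi).const_mul _)
      (Filter.Eventually.of_forall fun y => by positivity)]
  congr 1
  rw [MeasureTheory.integral_const_mul]
  have := integral_exp_rate one_pos c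
  simp only [one_mul] at this ⊢
  rw [this]

lemma lint_B {a b : ℝ} (hb : 0 ≤ b) :
    ∫⁻ z, (Ioi b).indicator (fun z => ENNReal.ofReal (Real.exp (-(max (a - z) 0 / 2)))) z
        ∂(eMeas 1)
      = ENNReal.ofReal (Breal a b) := by
  rw [lintegral_indicator measurableSet_Ioi _,
    eMeas_lintegral _ (by fun_prop) measurableSet_Ioi]
  have h1 : ∀ z ∈ Ioi b, eDens 1 z * ENNReal.ofReal (Real.exp (-(max (a - z) 0 / 2)))
      = ENNReal.ofReal (phiB a z) := by
    intro z hz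
    have hz0 : (0:ℝ) ≤ z := le_trans hb (le_of_lt hz)
    rw [eDens, if_pos hz0, ← ENNReal.ofReal_mul (by positivity)]
    congr 1
    simp [phiB]
  rw [setLIntegral_congr_fun measurableSet_Ioi h1,
    ← ofReal_integral_eq_lintegral_ofReal (phiB_integrableOn a b)
      (Filter.Eventually.of_forall fun z => by unfold phiB; positivity),
    integral_phiB]

lemma kap_region {a b c : ℝ} (ha : 0 ≤ a) (hb : 0 ≤ b) (hc : 0 ≤ c) :
    kap (Pre a b c ∩ {p | p.2.1 < p.1})
      = ENNReal.ofReal ((1/2) * Real.exp (-c)) * ENNReal.ofReal (Breal a b) := by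
  have hS : MeasurableSet (Pre a b c ∩ {p : ℝ × ℝ × ℝ | p.2.1 < p.1}) :=
    (measurableSet_Pre a b c).inter
      (measurableSet_lt (measurable_fst.comp measurable_snd) measurable_fst)
  rw [kap, Measure.prod_apply_symm hS]
  have hsec : ∀ q : ℝ × ℝ,
      eMeas (1/2) ((fun x => (x, q)) ⁻¹' (Pre a b c ∩ {p : ℝ × ℝ × ℝ | p.2.1 < p.1}))
        = (Ioi c).indicator (fun y => ENNReal.ofReal (Real.exp (-(y/2)))) q.1
          * (Ioi b).indicator (fun z => ENNReal.ofReal (Real.exp (-(max (a - z) 0 / 2)))) q.2 := by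
    rintro ⟨y, z⟩
    by_cases hy : c < y
    · by_cases hz : b < z
      · have hset : ((fun x => (x, (y, z))) ⁻¹' (Pre a b c ∩ {p : ℝ × ℝ × ℝ | p.2.1 < p.1}))
            = Ioi (y + max (a - z) 0) := by
          ext x
          simp only [Pre, Tmap, mem_preimage, mem_inter_iff, mem_prod, mem_Ioi, mem_setOf_eq]
          constructor
          · rintro ⟨⟨h1, _h2, _h3⟩, h4⟩
            have hmax : max (x - y) 0 = x - y := max_eq_left (by linarith)
            rw [hmax] at h1
            have e1 : a - z < x - y := by linarith
            have e2 : (0:ℝ) < x - y := by linarith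
            have := max_lt e1 e2
            linarith
          · intro hx
            have h0 : (0:ℝ) ≤ max (a - z) 0 := le_max_right _ _
            have hyx : y < x := by linarith
            have hmax1 : max (x - y) 0 = x - y := max_eq_left (by linarith)
            have hmax2 : max (y - x) 0 = 0 := max_eq_right (by linarith)
            refine ⟨⟨?_, ?_, ?_⟩, hyx⟩
            · rw [hmax1]
              have : max (a - z) 0 < x - y := by linarith
              have := lt_of_le_of_lt (le_max_left (a - z) 0) this
              linarith
            · rw [hmax2]; linarith
            · rw [min_eq_right hyx.le]; exact hy
        rw [hset, eMeas_Ioi (by norm_num : (0:ℝ) < 1/2)]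
        have hM : (0:ℝ) ≤ y + max (a - z) 0 := by
          have := le_max_right (a - z) 0
          have : (0:ℝ) ≤ y := le_trans hc hy.le
          positivity
        rw [max_eq_left hM]
        simp only [Set.indicator_apply, if_pos (mem_Ioi.2 hy), if_pos (mem_Ioi.2 hz)]
        rw [← ENNReal.ofReal_mul (by positivity), ← Real.exp_add]
        congr 2
        ring
      · have hset : ((fun x => (x, (y, z))) ⁻¹' (Pre a b c ∩ {p : ℝ × ℝ × ℝ | p.2.1 < p.1}))
            = ∅ := by
          ext x
          simp only [Pre, Tmap, mem_preimage, mem_inter_iff, mem_prod, mem_Ioi, mem_setOf_eq,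
            mem_empty_iff_false, iff_false, not_and]
          rintro ⟨_h1, h2, _h3⟩ h4
          have hmax2 : max (y - x) 0 = 0 := max_eq_right (by linarith)
          rw [hmax2] at h2
          exact hz (by linarith)
        rw [hset]
        simp [Set.indicator_apply, hz]
    · have hset : ((fun x => (x, (y, z))) ⁻¹' (Pre a b c ∩ {p : ℝ × ℝ × ℝ | p.2.1 < p.1}))
          = ∅ := by
        ext x
        simp only [Pre, Tmap, mem_preimage, mem_inter_iff, mem_prod, mem_Ioi, mem_setOf_eq,
          mem_empty_iff_false, iff_false, not_and]
        rintro ⟨_h1, _h2, h3⟩ h4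
        rw [min_eq_right h4.le] at h3
        exact hy h3
      rw [hset]
      simp [Set.indicator_apply, hy]
  have mA : Measurable ((Ioi c).indicator (fun y : ℝ => ENNReal.ofReal (Real.exp (-(y/2))))) :=
    ((Real.measurable_exp.comp (measurable_id.div_const 2).neg).ennreal_ofReal).indicator
      measurableSet_Ioi
  have mB : Measurable ((Ioi b).indicator
      (fun z : ℝ => ENNReal.ofReal (Real.exp (-(max (a - z) 0 / 2))))) :=
    ((Real.measurable_exp.comp
      ((((measurable_const.sub measurable_id).max measurable_const).div_const 2).neg)).ennreal_ofReal).indicator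
      measurableSet_Ioi
  rw [lintegral_congr hsec, lintegral_prod_mul mA.aemeasurable mB.aemeasurable,
    lint_A hc, lint_B hb]

noncomputable def sw : ℝ × ℝ × ℝ → ℝ × ℝ × ℝ := fun p => (p.2.1, p.1, p.2.2)

lemma measurable_sw : Measurable sw := by unfold sw; fun_prop

lemma kap_corner (a b c : ℝ) : kap (Ioi a ×ˢ Ioi b ×ˢ Ioi c)
    = ENNReal.ofReal (Real.exp (-(1/2 * max a 0)))
      * (ENNReal.ofReal (Real.exp (-(1/2 * max b 0))) * ENNReal.ofReal (Real.exp (-(1 * max c 0)))) := by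
  rw [kap, Measure.prod_prod, Measure.prod_prod, eMeas_Ioi (by norm_num : (0:ℝ) < 1/2),
    eMeas_Ioi (by norm_num : (0:ℝ) < 1/2), eMeas_Ioi one_pos]

lemma map_sw_kap : Measure.map sw kap = kap := by
  haveI : IsProbabilityMeasure (Measure.map sw kap) :=
    Measure.isProbabilityMeasure_map measurable_sw.aemeasurable
  refine ext3 _ _ (by simp) ?_
  intro a b c
  rw [Measure.map_apply measurable_sw
    (measurableSet_Ioi.prod (measurableSet_Ioi.prod measurableSet_Ioi))]
  have : sw ⁻¹' (Ioi a ×ˢ Ioi b ×ˢ Ioi c) = Ioi b ×ˢ Ioi a ×ˢ Ioi c := by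
    ext p
    simp only [sw, mem_preimage, mem_prod, mem_Ioi]
    tauto
  rw [this, kap_corner, kap_corner]
  ring

lemma kap_diag : kap {p : ℝ × ℝ × ℝ | p.1 = p.2.1} = 0 := by
  have hm : MeasurableSet {p : ℝ × ℝ × ℝ | p.1 = p.2.1} :=
    measurableSet_eq_fun measurable_fst (measurable_fst.comp measurable_snd)
  rw [kap, Measure.prod_apply hm]
  have : ∀ x : ℝ, ((eMeas (1/2)).prod (eMeas 1)) (Prod.mk x ⁻¹' {p : ℝ × ℝ × ℝ | p.1 = p.2.1})
      = 0 := by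
    intro x
    have : (Prod.mk x ⁻¹' {p : ℝ × ℝ × ℝ | p.1 = p.2.1}) = ({x} : Set ℝ) ×ˢ (univ : Set ℝ) := by
      ext q
      simp only [mem_preimage, mem_setOf_eq, mem_prod, mem_singleton_iff, mem_univ, and_true]
      exact eq_comm
    rw [this, Measure.prod_prod]
    have h0 : eMeas (1/2) ({x} : Set ℝ) = 0 :=
      (withDensity_absolutelyContinuous MeasureTheory.volume (eDens (1/2)))
        (measure_singleton x)
    rw [h0, zero_mul]
  have heq : ∫⁻ x, ((eMeas (1/2)).prod (eMeas 1))
      (Prod.mk x ⁻¹' {p : ℝ × ℝ × ℝ | p.1 = p.2.1}) ∂(eMeas (1/2)) = 0 := by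
    rw [lintegral_congr this, lintegral_zero]
  exact heq

lemma kap_pre_lt (a b c : ℝ) : kap (Pre a b c ∩ {p : ℝ × ℝ × ℝ | p.1 < p.2.1})
    = kap (Pre b a c ∩ {p : ℝ × ℝ × ℝ | p.2.1 < p.1}) := by
  have hX : MeasurableSet (Pre a b c ∩ {p : ℝ × ℝ × ℝ | p.1 < p.2.1}) :=
    (measurableSet_Pre a b c).inter
      (measurableSet_lt measurable_fst (measurable_fst.comp measurable_snd))
  conv_lhs => rw [← map_sw_kap]
  rw [Measure.map_apply measurable_sw hX]
  congr 1
  ext p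
  simp only [sw, Pre, Tmap, mem_preimage, mem_inter_iff, mem_prod, mem_Ioi, mem_setOf_eq]
  rw [min_comm]
  tauto

lemma kap_Pre_nonneg {a b c : ℝ} (ha : 0 ≤ a) (hb : 0 ≤ b) (hc : 0 ≤ c) :
    kap (Pre a b c) = ENNReal.ofReal (Real.exp (-(1/2 * a)))
      * (ENNReal.ofReal (Real.exp (-(1/2 * b))) * ENNReal.ofReal (Real.exp (-(1 * c)))) := by
  have hmlt : MeasurableSet {p : ℝ × ℝ × ℝ | p.2.1 < p.1} :=
    measurableSet_lt (measurable_fst.comp measurable_snd) measurable_fst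
  have hmlt' : MeasurableSet {p : ℝ × ℝ × ℝ | p.1 < p.2.1} :=
    measurableSet_lt measurable_fst (measurable_fst.comp measurable_snd)
  have hmeq : MeasurableSet {p : ℝ × ℝ × ℝ | p.1 = p.2.1} :=
    measurableSet_eq_fun measurable_fst (measurable_fst.comp measurable_snd)
  have hdecomp : Pre a b c = (Pre a b c ∩ {p : ℝ × ℝ × ℝ | p.2.1 < p.1})
      ∪ ((Pre a b c ∩ {p : ℝ × ℝ × ℝ | p.1 < p.2.1})
        ∪ (Pre a b c ∩ {p : ℝ × ℝ × ℝ | p.1 = p.2.1})) := by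
    ext p
    simp only [mem_union, mem_inter_iff, mem_setOf_eq]
    rcases lt_trichotomy p.2.1 p.1 with h | h | h <;> tauto
  have hd1 : Disjoint (Pre a b c ∩ {p : ℝ × ℝ × ℝ | p.2.1 < p.1})
      ((Pre a b c ∩ {p : ℝ × ℝ × ℝ | p.1 < p.2.1})
        ∪ (Pre a b c ∩ {p : ℝ × ℝ × ℝ | p.1 = p.2.1})) := by
    rw [disjoint_iff_inter_eq_empty]
    ext p
    simp only [mem_inter_iff, mem_union, mem_setOf_eq, mem_empty_iff_false, iff_false]
    rintro ⟨⟨_, h1⟩, h2⟩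
    rcases h2 with ⟨_, h2⟩ | ⟨_, h2⟩ <;> [exact absurd h2 (not_lt.2 h1.le); exact absurd h2 (by linarith)]
  have hd2 : Disjoint (Pre a b c ∩ {p : ℝ × ℝ × ℝ | p.1 < p.2.1})
      (Pre a b c ∩ {p : ℝ × ℝ × ℝ | p.1 = p.2.1}) := by
    rw [disjoint_iff_inter_eq_empty]
    ext p
    simp only [mem_inter_iff, mem_setOf_eq, mem_empty_iff_false, iff_false]
    rintro ⟨⟨_, h1⟩, _, h2⟩
    exact absurd h2 (by linarith)
  rw [hdecomp, measure_union hd1 (((measurableSet_Pre a b c).inter hmlt').union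
      ((measurableSet_Pre a b c).inter hmeq)),
    measure_union hd2 ((measurableSet_Pre a b c).inter hmeq)]
  have h3 : kap (Pre a b c ∩ {p : ℝ × ℝ × ℝ | p.1 = p.2.1}) = 0 :=
    measure_mono_null inter_subset_right kap_diag
  rw [h3, add_zero, kap_pre_lt, kap_region ha hb hc, kap_region hb ha hc,
    ← mul_add, ← ENNReal.ofReal_add (Breal_nonneg a b) (Breal_nonneg b a), Breal_add,
    ← ENNReal.ofReal_mul (by positivity)]
  rw [← ENNReal.ofReal_mul (by positivity), ← ENNReal.ofReal_mul (by positivity)]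
  congr 1
  rw [show (1:ℝ)/2 * Real.exp (-c) * (2 * Real.exp (-((a+b)/2)))
      = Real.exp (-c) * Real.exp (-((a+b)/2)) by ring,
    ← Real.exp_add, ← Real.exp_add, ← Real.exp_add]
  congr 1
  ring

def Oct : Set (ℝ × ℝ × ℝ) := {p | 0 < p.1 ∧ 0 < p.2.1 ∧ 0 < p.2.2}

lemma kap_compl_Oct : kap Octᶜ = 0 := by
  have hsub : Octᶜ ⊆ (Iic 0 ×ˢ ((univ : Set ℝ) ×ˢ (univ : Set ℝ)))
      ∪ (((univ : Set ℝ) ×ˢ (Iic 0 ×ˢ (univ : Set ℝ)))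
        ∪ ((univ : Set ℝ) ×ˢ ((univ : Set ℝ) ×ˢ Iic 0))) := by
    intro p hp
    simp only [Oct, mem_compl_iff, mem_setOf_eq, not_and_or, not_lt] at hp
    simp only [mem_union, mem_prod, mem_Iic, mem_univ, true_and, and_true]
    tauto
  refine measure_mono_null hsub ?_
  refine measure_union_null ?_ (measure_union_null ?_ ?_) <;>
    rw [kap, Measure.prod_prod, Measure.prod_prod] <;>
    simp [eMeas_Iic_zero]

lemma kap_Pre_eq_max (a b c : ℝ) :
    kap (Pre a b c) = kap (Pre (max a 0) (max b 0) (max c 0)) := by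
  rw [← measure_inter_conull (s := Pre a b c) kap_compl_Oct,
    ← measure_inter_conull (s := Pre (max a 0) (max b 0) (max c 0)) kap_compl_Oct]
  congr 1
  ext p
  simp only [Pre, Tmap, Oct, mem_inter_iff, mem_preimage, mem_prod, mem_Ioi, mem_setOf_eq]
  constructor
  · rintro ⟨⟨h1, h2, h3⟩, hx, hy, hz⟩
    have k1 : 0 < max (p.1 - p.2.1) 0 + p.2.2 := by
      have := le_max_right (p.1 - p.2.1) 0; linarith
    have k2 : 0 < max (p.2.1 - p.1) 0 + p.2.2 := by
      have := le_max_right (p.2.1 - p.1) 0; linarith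
    have k3 : 0 < min p.1 p.2.1 := lt_min hx hy
    exact ⟨⟨max_lt h1 k1, max_lt h2 k2, max_lt h3 k3⟩, hx, hy, hz⟩
  · rintro ⟨⟨h1, h2, h3⟩, hx, hy, hz⟩
    exact ⟨⟨(le_max_left a 0).trans_lt h1, (le_max_left b 0).trans_lt h2,
      (le_max_left c 0).trans_lt h3⟩, hx, hy, hz⟩

lemma burke_kernel : Measure.map Tmap kap = kap := by
  haveI : IsProbabilityMeasure (Measure.map Tmap kap) :=
    Measure.isProbabilityMeasure_map measurable_Tmap.aemeasurable
  refine ext3 _ _ (by simp) ?_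
  intro a b c
  rw [Measure.map_apply measurable_Tmap
    (measurableSet_Ioi.prod (measurableSet_Ioi.prod measurableSet_Ioi))]
  have : Tmap ⁻¹' (Ioi a ×ˢ Ioi b ×ˢ Ioi c) = Pre a b c := rfl
  rw [this, kap_Pre_eq_max,
    kap_Pre_nonneg (le_max_right a 0) (le_max_right b 0) (le_max_right c 0), kap_corner]


/-- One-step Burke property: if `I, J` are independent Exponential of rate `1/2`
and `w` an independent Exponential of rate `1`, then with
`I' = (I − J)⁺ + w`, `J' = (J − I)⁺ + w` and `Y = min(I,J)`, the triple
`(I', J', Y)` has the same joint law as `(I, J, w)`. -/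
theorem burke_one_step {Ω : Type*} [MeasurableSpace Ω] (μ : Measure Ω)
    [IsProbabilityMeasure μ] (I J w : Ω → ℝ)
    (hI : Measurable I) (hJ : Measurable J) (hw : Measurable w)
    (hind : iIndepFun (m := fun _ => (inferInstance : MeasurableSpace ℝ)) ![I, J, w] μ)
    (hId : ∀ s : ℝ, 0 ≤ s → μ {ω | s < I ω} = ENNReal.ofReal (Real.exp (-(s / 2))))
    (hJd : ∀ s : ℝ, 0 ≤ s → μ {ω | s < J ω} = ENNReal.ofReal (Real.exp (-(s / 2))))
    (hwd : ∀ s : ℝ, 0 ≤ s → μ {ω | s < w ω} = ENNReal.ofReal (Real.exp (-s))) :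
    Measure.map (fun ω0 =>
        (max (I ω0 - J ω0) 0 + w ω0, max (J ω0 - I ω0) 0 + w ω0,
          min (I ω0) (J ω0))) μ
      = Measure.map (fun ω0 => (I ω0, J ω0, w ω0)) μ := by
  have hm : ∀ i, Measurable (![I, J, w] i) := by
    intro i
    fin_cases i <;> simpa
  -- marginal laws
  have tail : ∀ (f : Ω → ℝ), Measurable f →
      (∀ s : ℝ, 0 ≤ s → μ {ω | s < f ω} = ENNReal.ofReal (Real.exp (-(s / 2)))) →
      μ.map f = eMeas (1/2) := by
    intro f hf h
    haveI : IsProbabilityMeasure (μ.map f) := Measure.isProbabilityMeasure_map hf.aemeasurable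
    refine eq_eMeas_of_tail _ (by norm_num) ?_
    intro s hs
    rw [Measure.map_apply hf measurableSet_Ioi]
    have : f ⁻¹' Ioi s = {ω | s < f ω} := rfl
    rw [this, h s hs]
    norm_num
    rw [div_eq_mul_inv, mul_comm]
    norm_num
  have hIm : μ.map I = eMeas (1/2) := tail I hI hId
  have hJm : μ.map J = eMeas (1/2) := tail J hJ hJd
  have hwm : μ.map w = eMeas 1 := by
    haveI : IsProbabilityMeasure (μ.map w) := Measure.isProbabilityMeasure_map hw.aemeasurable
    refine eq_eMeas_of_tail _ one_pos ?_
    intro s hs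
    rw [Measure.map_apply hw measurableSet_Ioi]
    have : w ⁻¹' Ioi s = {ω | s < w ω} := rfl
    rw [this, hwd s hs]
    norm_num
  -- independence: joint law is a product
  have hJW : IndepFun J w μ := by
    have := hind.indepFun (i := 1) (j := 2) (by decide)
    simpa using this
  have hIJW : IndepFun I (fun ω => (J ω, w ω)) μ := by
    have := hind.indepFun_prodMk hm 1 2 0 (by decide) (by decide)
    simpa using this.symm
  have hjoint : μ.map (fun ω => (I ω, J ω, w ω)) = kap := by
    have h1 := (indepFun_iff_map_prod_eq_prod_map_map hI.aemeasurable
      (hJ.prodMk hw).aemeasurable).1 hIJW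
    have h2 := (indepFun_iff_map_prod_eq_prod_map_map hJ.aemeasurable
      hw.aemeasurable).1 hJW
    calc μ.map (fun ω => (I ω, J ω, w ω))
        = (μ.map I).prod (μ.map (fun ω => (J ω, w ω))) := h1
      _ = (μ.map I).prod ((μ.map J).prod (μ.map w)) := by rw [h2]
      _ = kap := by rw [hIm, hJm, hwm, kap]
  have hfun : (fun ω0 =>
      (max (I ω0 - J ω0) 0 + w ω0, max (J ω0 - I ω0) 0 + w ω0, min (I ω0) (J ω0)))
      = Tmap ∘ (fun ω0 => (I ω0, J ω0, w ω0)) := rfl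
  rw [hfun, ← Measure.map_map measurable_Tmap (hI.prodMk (hJ.prodMk hw)), hjoint,
    burke_kernel]
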